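/- arXiv:1102.4738 — 5 statements merged into one kernel-verified Lean document; each statement's English description precedes it below -/
import Mathlib

section
/- The Jacobian determinant of the squaring map Φ_Id : M(2;ℂ) → M(2;ℂ), M ↦ M², at a matrix M equals 4·(tr M)²·det M. -/
/-- Identify M(2;ℂ) with ℂ⁴ via (x,y,z,t); the squaring map in coordinates. -/
noncomputable def PhiId : (Fin 4 → ℂ) → (Fin 4 → ℂ) := fun p =>
  ![p 0 ^ 2 + p 1 * p 2, p 1 * (p 0 + p 3), p 2 * (p 0 + p 3), p 3 ^ 2 + p 1 * p 2]

/-- Jacobian matrix of PhiId at p. -/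
noncomputable def Jmat (p : Fin 4 → ℂ) : Matrix (Fin 4) (Fin 4) ℂ :=
  !![2 * p 0, p 2, p 1, 0;
     p 1, p 0 + p 3, 0, p 1;
     p 2, 0, p 0 + p 3, p 2;
     0, p 2, p 1, 2 * p 3]

lemma hasFDerivAt_PhiId (p : Fin 4 → ℂ) :
    HasFDerivAt PhiId ((Matrix.mulVecLin (Jmat p)).toContinuousLinearMap) p := by
  apply hasFDerivAt_pi''
  intro i
  have hproj : ∀ j : Fin 4, HasFDerivAt (fun x : Fin 4 → ℂ => x j)
      ((ContinuousLinearMap.proj j : (Fin 4 → ℂ) →L[ℂ] ℂ)) p :=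
    fun j => by exact hasFDerivAt_apply j p
  fin_cases i
  · refine HasFDerivAt.congr_of_eventuallyEq
      ((((hproj 0).mul (hproj 0)).add ((hproj 1).mul (hproj 2))).congr_fderiv
        (by ext v; simp [Jmat, Matrix.mulVec, dotProduct, Fin.sum_univ_four]; ring))
      (Filter.Eventually.of_forall fun x => by simp [PhiId]; ring)
  · exact (((hproj 1).mul ((hproj 0).add (hproj 3))).congr_fderiv
      (by ext v; simp [Jmat, Matrix.mulVec, dotProduct, Fin.sum_univ_four]; ring))
  · exact (((hproj 2).mul ((hproj 0).add (hproj 3))).congr_fderiv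
      (by ext v; simp [Jmat, Matrix.mulVec, dotProduct, Fin.sum_univ_four]; ring))
  · refine HasFDerivAt.congr_of_eventuallyEq
      ((((hproj 3).mul (hproj 3)).add ((hproj 1).mul (hproj 2))).congr_fderiv
        (by ext v; simp [Jmat, Matrix.mulVec, dotProduct, Fin.sum_univ_four]; ring))
      (Filter.Eventually.of_forall fun x => by simp [PhiId]; ring)

theorem jacobian_det_of_squaring (p : Fin 4 → ℂ) :
    LinearMap.det ((fderiv ℂ PhiId p : (Fin 4 → ℂ) →L[ℂ] (Fin 4 → ℂ)) :
        (Fin 4 → ℂ) →ₗ[ℂ] (Fin 4 → ℂ)) =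
      4 * (p 0 + p 3) ^ 2 * (p 0 * p 3 - p 1 * p 2) := by
  rw [(hasFDerivAt_PhiId p).fderiv]
  rw [LinearMap.coe_toContinuousLinearMap]
  have : (Jmat p).mulVecLin = Matrix.toLin' (Jmat p) := rfl
  rw [this, LinearMap.det_toLin']
  simp [Jmat, Matrix.det_succ_row_zero, Fin.sum_univ_succ, Fin.succAbove]
  ring
end

section
/- Let Φ : M(2;ℂ) → M(2;ℂ) be compatible with conjugation (Φ(AMA⁻¹) = AΦ(M)A⁻¹ for all invertible A). Then for every M, Φ(M) commutes with M. -/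
theorem commutes_of_conj_compatible
    (Φ : Matrix (Fin 2) (Fin 2) ℂ → Matrix (Fin 2) (Fin 2) ℂ)
    (hΦ : ∀ A : GL (Fin 2) ℂ, ∀ M : Matrix (Fin 2) (Fin 2) ℂ,
      Φ ((A : Matrix (Fin 2) (Fin 2) ℂ) * M * ((A⁻¹ : GL (Fin 2) ℂ) : Matrix (Fin 2) (Fin 2) ℂ)) =
        (A : Matrix (Fin 2) (Fin 2) ℂ) * Φ M * ((A⁻¹ : GL (Fin 2) ℂ) : Matrix (Fin 2) (Fin 2) ℂ)) :
    ∀ M : Matrix (Fin 2) (Fin 2) ℂ, M * Φ M = Φ M * M := by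
  intro M
  -- any invertible matrix commuting with M commutes with Φ M
  have key : ∀ u : (Matrix (Fin 2) (Fin 2) ℂ)ˣ,
      (u : Matrix (Fin 2) (Fin 2) ℂ) * M = M * u →
      (u : Matrix (Fin 2) (Fin 2) ℂ) * Φ M = Φ M * u := by
    intro u hu
    have h := hΦ u M
    have hc : ((u⁻¹ : GL (Fin 2) ℂ) : Matrix (Fin 2) (Fin 2) ℂ)
        = ((u⁻¹ : (Matrix (Fin 2) (Fin 2) ℂ)ˣ) : Matrix (Fin 2) (Fin 2) ℂ) := rfl
    rw [hc, hu, mul_assoc, Units.mul_inv, mul_one] at h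
    calc (u : Matrix (Fin 2) (Fin 2) ℂ) * Φ M
        = (u : Matrix (Fin 2) (Fin 2) ℂ) * Φ M * ↑u⁻¹ * u := by
          rw [mul_assoc, Units.inv_mul, mul_one]
      _ = Φ M * u := by rw [← h]
  -- choose t ∈ {1,2,3} with 1 + t • M invertible
  have hdet : ∀ t : ℂ, (1 + t • M).det =
      (1 + t * M 0 0) * (1 + t * M 1 1) - t * M 0 1 * (t * M 1 0) := by
    intro t
    simp [Matrix.det_fin_two, Matrix.one_apply, Matrix.add_apply, Matrix.smul_apply]
  have hex : ∃ t : ℂ, t ≠ 0 ∧ (1 + t • M).det ≠ 0 := by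
    by_contra hcon
    push_neg at hcon
    have h1 := hcon 1 one_ne_zero
    have h2 := hcon 2 two_ne_zero
    have h3 := hcon 3 three_ne_zero
    rw [hdet] at h1 h2 h3
    have : (1 : ℂ) = 0 := by linear_combination 3 * h1 - 3 * h2 + h3
    exact one_ne_zero this
  obtain ⟨t, ht0, htd⟩ := hex
  have hB : IsUnit (1 + t • M) :=
    (Matrix.isUnit_iff_isUnit_det _).mpr (isUnit_iff_ne_zero.mpr htd)
  obtain ⟨u, hu⟩ := hB
  have hcomm : (u : Matrix (Fin 2) (Fin 2) ℂ) * M = M * u := by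
    rw [hu]
    simp [add_mul, mul_add, Matrix.smul_mul, Matrix.mul_smul]
  have h := key u hcomm
  rw [hu] at h
  have h' : t • (M * Φ M) = t • (Φ M * M) := by
    have := h
    simp only [add_mul, mul_add, one_mul, mul_one, Matrix.smul_mul, Matrix.mul_smul] at this
    have := add_left_cancel this
    simpa using this
  exact smul_right_injective _ ht0 h'
end

section
/- A monic quadratic polynomial P(z) = z² − bz + c over ℂ has one root of modulus 1 and the other of modulus at most 1 if and only if |c|² − (1/2)|b|² − (1/2)|b² − 4c| + 1 = 0 and |c| ≤ 1. -/
lemma key_factor (l₁ l₂ : ℂ) :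
    ‖l₁ * l₂‖ ^ 2 - (1 / 2) * ‖l₁ + l₂‖ ^ 2
      - (1 / 2) * ‖(l₁ + l₂) ^ 2 - 4 * (l₁ * l₂)‖ + 1
    = (‖l₁‖ ^ 2 - 1) * (‖l₂‖ ^ 2 - 1) := by
  have h : (l₁ + l₂) ^ 2 - 4 * (l₁ * l₂) = (l₁ - l₂) ^ 2 := by ring
  rw [h, norm_pow, norm_mul, mul_pow, Complex.sq_norm, Complex.sq_norm, Complex.sq_norm,
    Complex.sq_norm, Complex.normSq_add, Complex.normSq_sub]
  ring

theorem root_modulus_criterion (b c : ℂ) :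
    (∃ l₁ l₂ : ℂ, l₁ + l₂ = b ∧ l₁ * l₂ = c ∧ ‖l₁‖ = 1 ∧ ‖l₂‖ ≤ 1) ↔
      (‖c‖ ^ 2 - (1 / 2) * ‖b‖ ^ 2
          - (1 / 2) * ‖b ^ 2 - 4 * c‖ + 1 = 0 ∧ ‖c‖ ≤ 1) := by
  constructor
  · rintro ⟨l₁, l₂, hs, hp, h1, h2⟩
    subst hs; subst hp
    constructor
    · rw [key_factor, h1]; ring
    · rw [norm_mul, h1, one_mul]; exact h2
  · rintro ⟨heq, hle⟩
    obtain ⟨d, hd⟩ := IsAlgClosed.exists_pow_nat_eq (b ^ 2 - 4 * c) (n := 2) two_pos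
    set l₁ := (b + d) / 2 with hl₁
    set l₂ := (b - d) / 2 with hl₂
    have hs : l₁ + l₂ = b := by rw [hl₁, hl₂]; ring
    have hp : l₁ * l₂ = c := by
      rw [hl₁, hl₂]; linear_combination (-(1 : ℂ) / 4) * hd
    have hk := key_factor l₁ l₂
    rw [hs, hp, heq] at hk
    rcases mul_eq_zero.mp hk.symm with h | h
    · have h1 : ‖l₁‖ = 1 := by nlinarith [norm_nonneg l₁]
      have h2 : ‖l₂‖ ≤ 1 := by
        rw [← hp, norm_mul, h1, one_mul] at hle; exact hle
      exact ⟨l₁, l₂, hs, hp, h1, h2⟩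
    · have h1 : ‖l₂‖ = 1 := by nlinarith [norm_nonneg l₂]
      have h2 : ‖l₁‖ ≤ 1 := by
        rw [← hp, norm_mul, h1, mul_one] at hle; exact hle
      exact ⟨l₂, l₁, by rw [← hs]; ring, by rw [← hp]; ring, h1, h2⟩
end

section
/- For a linear map ψ : M(2;ℂ) → M(2;ℂ) satisfying M·ψ(M) + ψ(M)·M = 0 for all 2×2 complex matrices M, one has ψ = 0. -/
theorem linear_anticommuting_is_zero
    (ψ : Matrix (Fin 2) (Fin 2) ℂ →ₗ[ℂ] Matrix (Fin 2) (Fin 2) ℂ)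
    (h : ∀ M : Matrix (Fin 2) (Fin 2) ℂ, M * ψ M + ψ M * M = 0) :
    ψ = 0 := by
  have h1 : ψ 1 = 0 := by
    have h0 := h 1
    rw [one_mul, mul_one] at h0
    have h2 : (2 : ℂ) • ψ 1 = 0 := by rw [two_smul]; exact h0
    simpa using h2
  ext M : 1
  have hM := h M
  have hMN := h (M + 1)
  rw [map_add, h1, add_zero, add_mul, mul_add, one_mul, mul_one] at hMN
  have h3 : ψ M + ψ M = 0 := by
    have : (M * ψ M + ψ M * M) + (ψ M + ψ M) = 0 := by
      rw [← hMN]; abel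
    rw [hM, zero_add] at this
    exact this
  have h4 : (2 : ℂ) • ψ M = 0 := by rw [two_smul]; exact h3
  simpa using h4
end

section
/- Let A = [[1,1],[0,1]] and Φ_A(M) = A·M². For upper triangular matrices, the n-th iterate satisfies Φ_Aⁿ([[x,y],[0,t]]) = [[x^(2^n), Bₙ(x,t)·y + Cₙ(x,t)],[0, t^(2^n)]] where Bₙ(x,t) = ∏_{i=0}^{n−1}(x^(2^i) + t^(2^i)) and Cₙ(x,t) = t^(2^n) + ∑_{k=1}^{n−1} t^(2^k)·∏_{i=k}^{n−1}(x^(2^i) + t^(2^i)). -/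
lemma one_step (X Y T : ℂ) :
    (!![1, 1; 0, 1] : Matrix (Fin 2) (Fin 2) ℂ) * (!![X, Y; 0, T]) ^ 2 =
      !![X ^ 2, (X + T) * Y + T ^ 2; 0, T ^ 2] := by
  rw [pow_two, Matrix.mul_fin_two, Matrix.mul_fin_two]
  congr 1 <;> ring

theorem iterate_of_PhiA_nondiag (n : ℕ) (hn : 1 ≤ n) (x y t : ℂ) :
    (fun M : Matrix (Fin 2) (Fin 2) ℂ => (!![1, 1; 0, 1] : Matrix (Fin 2) (Fin 2) ℂ) * M ^ 2)^[n]
        !![x, y; 0, t] =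
      !![x ^ 2 ^ n,
          (∏ i ∈ Finset.range n, (x ^ 2 ^ i + t ^ 2 ^ i)) * y +
            (t ^ 2 ^ n + ∑ k ∈ Finset.Ico 1 n,
              t ^ 2 ^ k * ∏ i ∈ Finset.Ico k n, (x ^ 2 ^ i + t ^ 2 ^ i));
         0, t ^ 2 ^ n] := by
  have hsq : ∀ (a : ℂ) (m : ℕ), a ^ 2 ^ (m + 1) = (a ^ 2 ^ m) ^ 2 := by
    intro a m; rw [← pow_mul, ← pow_succ]
  induction n, hn using Nat.le_induction with
  | base =>
    rw [Function.iterate_one, one_step]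
    norm_num
  | succ n hn ih =>
    rw [Function.iterate_succ_apply', ih, one_step, hsq x n, hsq t n]
    have hoff :
        (x ^ 2 ^ n + t ^ 2 ^ n) *
            ((∏ i ∈ Finset.range n, (x ^ 2 ^ i + t ^ 2 ^ i)) * y +
              (t ^ 2 ^ n + ∑ k ∈ Finset.Ico 1 n,
                t ^ 2 ^ k * ∏ i ∈ Finset.Ico k n, (x ^ 2 ^ i + t ^ 2 ^ i))) +
          (t ^ 2 ^ n) ^ 2 =
        (∏ i ∈ Finset.range (n + 1), (x ^ 2 ^ i + t ^ 2 ^ i)) * y +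
          ((t ^ 2 ^ n) ^ 2 + ∑ k ∈ Finset.Ico 1 (n + 1),
            t ^ 2 ^ k * ∏ i ∈ Finset.Ico k (n + 1), (x ^ 2 ^ i + t ^ 2 ^ i)) := by
      have hsplit : ∀ k ∈ Finset.Ico 1 n,
          t ^ 2 ^ k * ∏ i ∈ Finset.Ico k (n + 1), (x ^ 2 ^ i + t ^ 2 ^ i) =
          (x ^ 2 ^ n + t ^ 2 ^ n) *
            (t ^ 2 ^ k * ∏ i ∈ Finset.Ico k n, (x ^ 2 ^ i + t ^ 2 ^ i)) := by
        intro k hk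
        rw [Finset.prod_Ico_succ_top (Finset.mem_Ico.mp hk).2.le]
        ring
      rw [Finset.prod_range_succ, Finset.sum_Ico_succ_top (by omega : 1 ≤ n),
        Finset.sum_congr rfl hsplit, ← Finset.mul_sum,
        Finset.prod_Ico_succ_top le_rfl, Finset.Ico_self, Finset.prod_empty]
      ring
    rw [hoff]
end
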